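/- Let n be an even positive integer with prime factorization n = 2^e q_1^{e_1} \cdots q_l^{e_l} (q_i distinct odd primes). If S_{2^e - 1} \equiv r \pmod{2^e} and S_{q_i^{e_i} - 1} \equiv -r \pmod{q_i^{e_i}} for all i, then S_{n-1} \equiv r \pmod{n}. -/

import Mathlib

open Finset

private lemma descFactorial_modEq (d N : ℕ) (hN : (N : ℤ) ≡ -1 [ZMOD (d : ℤ)]) :
    ∀ j, j ≤ N →
      (Nat.descFactorial N j : ℤ) ≡ (-1) ^ j * (Nat.factorial j : ℤ) [ZMOD (d : ℤ)]
  | 0, _ => by simp [Int.ModEq.refl]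
  | (j + 1), hj => by
    have hj' : j ≤ N := Nat.le_of_succ_le hj
    have ih := descFactorial_modEq d N hN j hj'
    have hcast : ((N - j : ℕ) : ℤ) = (N : ℤ) - j := by
      exact_mod_cast Int.ofNat_sub hj'
    have h1 : ((N - j : ℕ) : ℤ) ≡ -((j : ℤ) + 1) [ZMOD (d : ℤ)] := by
      rw [hcast]
      have := hN.sub_right (j : ℤ)
      calc (N : ℤ) - j ≡ -1 - j [ZMOD (d : ℤ)] := this
        _ = -((j : ℤ) + 1) := by ring
    have h2 := h1.mul ih
    calc (Nat.descFactorial N (j + 1) : ℤ)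
        = ((N - j : ℕ) : ℤ) * (Nat.descFactorial N j : ℤ) := by
          rw [Nat.descFactorial_succ]; push_cast; ring
      _ ≡ -((j : ℤ) + 1) * ((-1) ^ j * (Nat.factorial j : ℤ)) [ZMOD (d : ℤ)] := h2
      _ = (-1) ^ (j + 1) * (Nat.factorial (j + 1) : ℤ) := by
          rw [Nat.factorial_succ]; push_cast; ring

private lemma derangement_fact_sum (d n : ℕ) (hn : 0 < n) (hd : (d : ℤ) ∣ (n : ℤ)) :
    (numDerangements (n - 1) : ℤ) ≡
      (-1) ^ (n - 1) * ∑ j ∈ Finset.range n, (Nat.factorial j : ℤ) [ZMOD (d : ℤ)] := by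
  obtain ⟨N, rfl⟩ := Nat.exists_eq_succ_of_ne_zero hn.ne'
  have hN : (N : ℤ) ≡ -1 [ZMOD (d : ℤ)] := by
    rw [Int.modEq_iff_dvd]
    have h : (-1 - (N : ℤ)) = -((N + 1 : ℕ) : ℤ) := by push_cast; ring
    rw [h]
    exact dvd_neg.mpr hd
  have e1 : (numDerangements N : ℤ) =
      ∑ i ∈ Finset.range (N + 1), (-1 : ℤ) ^ (N - i) * (Nat.descFactorial N i : ℤ) := by
    rw [numDerangements_sum, ← Finset.sum_range_reflect]
    refine Finset.sum_congr rfl fun i hi => ?_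
    have hi' : i ≤ N := Nat.lt_succ_iff.mp (Finset.mem_range.mp hi)
    have h0 : N + 1 - 1 - i = N - i := by omega
    rw [h0, show N - (N - i) = i by omega,
      ← Nat.add_descFactorial_eq_ascFactorial, Nat.sub_add_cancel hi']
  have hterm : ∀ i ∈ Finset.range (N + 1),
      (-1 : ℤ) ^ (N - i) * (Nat.descFactorial N i : ℤ) ≡
        (-1) ^ N * (Nat.factorial i : ℤ) [ZMOD (d : ℤ)] := by
    intro i hi
    have hi' : i ≤ N := Nat.lt_succ_iff.mp (Finset.mem_range.mp hi)
    calc (-1 : ℤ) ^ (N - i) * (Nat.descFactorial N i : ℤ)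
        ≡ (-1) ^ (N - i) * ((-1) ^ i * (Nat.factorial i : ℤ)) [ZMOD (d : ℤ)] :=
          (descFactorial_modEq d N hN i hi').mul_left _
      _ = (-1) ^ N * (Nat.factorial i : ℤ) := by
          rw [← mul_assoc, ← pow_add, Nat.sub_add_cancel hi']
  have hsum : (∑ i ∈ Finset.range (N + 1), (-1 : ℤ) ^ (N - i) * (Nat.descFactorial N i : ℤ)) ≡
      ∑ i ∈ Finset.range (N + 1), (-1 : ℤ) ^ N * (Nat.factorial i : ℤ) [ZMOD (d : ℤ)] := by
    rw [Int.modEq_iff_dvd, ← Finset.sum_sub_distrib]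
    exact Finset.dvd_sum fun i hi => (hterm i hi).dvd
  simp only [Nat.succ_sub_one]
  rw [e1]
  calc (∑ i ∈ Finset.range (N + 1), (-1 : ℤ) ^ (N - i) * (Nat.descFactorial N i : ℤ))
      ≡ ∑ i ∈ Finset.range (N + 1), (-1 : ℤ) ^ N * (Nat.factorial i : ℤ) [ZMOD (d : ℤ)] := hsum
    _ = (-1) ^ N * ∑ j ∈ Finset.range (N + 1), (Nat.factorial j : ℤ) := by
        rw [Finset.mul_sum]

private lemma derangement_key (n d : ℕ) (hn : 0 < n) (hd0 : 0 < d) (hd : d ∣ n) :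
    (numDerangements (n - 1) : ℤ) ≡
      (-1) ^ (n - 1) * (-1) ^ (d - 1) * (numDerangements (d - 1) : ℤ) [ZMOD (d : ℤ)] := by
  have hdn : d ≤ n := Nat.le_of_dvd hn hd
  have hdz : (d : ℤ) ∣ (n : ℤ) := Int.natCast_dvd_natCast.mpr hd
  have B1 := derangement_fact_sum d n hn hdz
  have B2 := derangement_fact_sum d d hd0 dvd_rfl
  have hT : (∑ j ∈ Finset.range d, (Nat.factorial j : ℤ)) ≡
      ∑ j ∈ Finset.range n, (Nat.factorial j : ℤ) [ZMOD (d : ℤ)] := by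
    rw [Int.modEq_iff_dvd]
    have hsplit : (∑ j ∈ Finset.range n, (Nat.factorial j : ℤ)) -
        ∑ j ∈ Finset.range d, (Nat.factorial j : ℤ) =
        ∑ j ∈ Finset.Ico d n, (Nat.factorial j : ℤ) := by
      rw [Finset.range_eq_Ico,
        ← Finset.sum_Ico_consecutive (fun j => (Nat.factorial j : ℤ)) (Nat.zero_le d) hdn]
      simp only [Finset.range_eq_Ico]
      ring
    rw [hsplit]
    refine Finset.dvd_sum fun j hj => ?_
    have : d ∣ Nat.factorial j :=
      Nat.dvd_factorial hd0 (Finset.mem_Ico.mp hj).1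
    exact_mod_cast Int.natCast_dvd_natCast.mpr this
  have hsq : ((-1 : ℤ) ^ (d - 1)) * ((-1 : ℤ) ^ (d - 1)) = 1 := by
    rcases Nat.even_or_odd (d - 1) with h | h <;> simp [h.neg_one_pow]
  calc (numDerangements (n - 1) : ℤ)
      ≡ (-1) ^ (n - 1) * ∑ j ∈ Finset.range n, (Nat.factorial j : ℤ) [ZMOD (d : ℤ)] := B1
    _ ≡ (-1) ^ (n - 1) * ∑ j ∈ Finset.range d, (Nat.factorial j : ℤ) [ZMOD (d : ℤ)] :=
        (hT.symm).mul_left _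
    _ = (-1) ^ (n - 1) * (-1) ^ (d - 1) *
        ((-1) ^ (d - 1) * ∑ j ∈ Finset.range d, (Nat.factorial j : ℤ)) := by
        rw [← mul_assoc, mul_assoc ((-1 : ℤ) ^ (n - 1)), hsq, mul_one]
    _ ≡ (-1) ^ (n - 1) * (-1) ^ (d - 1) * (numDerangements (d - 1) : ℤ) [ZMOD (d : ℤ)] :=
        (B2.symm).mul_left _

/-- Let `n = 2^e * ∏ q_i^{e_i}` be even (`e ≥ 1`), `q_i` distinct odd primes. If
`S_{2^e-1} ≡ r (mod 2^e)` and `S_{q_i^{e_i}-1} ≡ -r (mod q_i^{e_i})` for all `i`,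
then `S_{n-1} ≡ r (mod n)`. -/
theorem derangement_crt_even (l : ℕ) (q ee : Fin l → ℕ) (e : ℕ) (r : ℤ)
    (hq : ∀ i, (q i).Prime) (hodd : ∀ i, Odd (q i)) (hinj : Function.Injective q)
    (hee : ∀ i, 0 < ee i) (he : 0 < e)
    (h2 : (numDerangements (2 ^ e - 1) : ℤ) ≡ r [ZMOD ((2 ^ e : ℕ) : ℤ)])
    (hcong : ∀ i, (numDerangements (q i ^ ee i - 1) : ℤ) ≡ -r [ZMOD ((q i ^ ee i : ℕ) : ℤ)]) :
    (numDerangements ((2 ^ e * ∏ i, q i ^ ee i) - 1) : ℤ) ≡ r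
      [ZMOD ((2 ^ e * ∏ i, q i ^ ee i : ℕ) : ℤ)] := by
  set P : ℕ := ∏ i, q i ^ ee i with hP
  set n : ℕ := 2 ^ e * P with hn
  have h2pos : 0 < 2 ^ e := Nat.pow_pos (by norm_num)
  have hqpos : ∀ i, 0 < q i ^ ee i := fun i => Nat.pow_pos (hq i).pos
  have hPpos : 0 < P := Finset.prod_pos fun i _ => hqpos i
  have hnpos : 0 < n := Nat.mul_pos h2pos hPpos
  have h2even : Even (2 ^ e) := Nat.even_pow.mpr ⟨even_two, he.ne'⟩
  have hneven : Even n := h2even.mul_right P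
  have hn1odd : Odd (n - 1) := Nat.Even.sub_odd hnpos hneven odd_one
  have h2e1odd : Odd (2 ^ e - 1) := Nat.Even.sub_odd h2pos h2even odd_one
  have hqodd : ∀ i, Odd (q i ^ ee i) := fun i => (hodd i).pow
  have hqe1even : ∀ i, Even (q i ^ ee i - 1) := fun i =>
    Nat.Odd.sub_odd (hqodd i) odd_one
  set S : ℤ := (numDerangements (n - 1) : ℤ) with hS
  -- congruence mod 2^e
  have c2 : S ≡ r [ZMOD ((2 ^ e : ℕ) : ℤ)] := by
    have hk := derangement_key n (2 ^ e) hnpos h2pos ⟨P, rfl⟩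
    rw [hn1odd.neg_one_pow, h2e1odd.neg_one_pow] at hk
    calc S ≡ -1 * -1 * (numDerangements (2 ^ e - 1) : ℤ) [ZMOD ((2 ^ e : ℕ) : ℤ)] := hk
      _ = (numDerangements (2 ^ e - 1) : ℤ) := by ring
      _ ≡ r [ZMOD ((2 ^ e : ℕ) : ℤ)] := h2
  -- congruence mod q i ^ ee i
  have cq : ∀ i, S ≡ r [ZMOD ((q i ^ ee i : ℕ) : ℤ)] := by
    intro i
    have hdvd : q i ^ ee i ∣ n :=
      Dvd.dvd.mul_left (Finset.dvd_prod_of_mem _ (Finset.mem_univ i)) _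
    have hk := derangement_key n (q i ^ ee i) hnpos (hqpos i) hdvd
    rw [hn1odd.neg_one_pow, (hqe1even i).neg_one_pow] at hk
    calc S ≡ -1 * 1 * (numDerangements (q i ^ ee i - 1) : ℤ)
          [ZMOD ((q i ^ ee i : ℕ) : ℤ)] := hk
      _ = -(numDerangements (q i ^ ee i - 1) : ℤ) := by ring
      _ ≡ -(-r) [ZMOD ((q i ^ ee i : ℕ) : ℤ)] := (hcong i).neg
      _ = r := by ring
  -- combine via coprimality
  rw [Int.modEq_iff_dvd]
  have hd2 : ((2 ^ e : ℕ) : ℤ) ∣ r - S := (Int.modEq_iff_dvd.mp c2)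
  have hdq : ∀ i, ((q i ^ ee i : ℕ) : ℤ) ∣ r - S := fun i => Int.modEq_iff_dvd.mp (cq i)
  have hdP : ((P : ℕ) : ℤ) ∣ r - S := by
    have : (∏ i, ((q i ^ ee i : ℕ) : ℤ)) ∣ r - S := by
      refine Fintype.prod_dvd_of_coprime ?_ hdq
      intro i j hij
      have hco : Nat.Coprime (q i ^ ee i) (q j ^ ee j) :=
        ((Nat.coprime_primes (hq i) (hq j)).mpr fun h => hij (hinj h)).pow _ _
      exact Nat.isCoprime_iff_coprime.mpr hco
    simpa [hP] using this
  have hcoP : Nat.Coprime (2 ^ e) P := by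
    refine Nat.Coprime.pow_left e (Nat.Coprime.prod_right fun i _ => ?_)
    refine Nat.Coprime.pow_right _ ?_
    rw [Nat.coprime_primes Nat.prime_two (hq i)]
    intro h
    have := hodd i
    rw [← h] at this
    exact (Nat.not_odd_iff_even.mpr even_two) this
  have : ((n : ℕ) : ℤ) ∣ r - S := by
    have hiso : IsCoprime ((2 ^ e : ℕ) : ℤ) ((P : ℕ) : ℤ) := by
      exact_mod_cast hcoP.isCoprime
    have := hiso.mul_dvd hd2 hdP
    simpa [hn, Nat.cast_mul] using this
  exact_mod_cast this
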